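/- arXiv:2511.00928 — 2 statements merged into one kernel-verified Lean document; each statement's English description precedes it below -/
import Mathlib

section
/- Suppose each P_γ + K is closed, and there exists e ∈ K \ {0} such that for every λ ∈ Λ the infimum inf_{γ∈Γ} ℤ₁^{e,K}(P_γ, Q_λ) is attained. Then P ≤_K^L Q if and only if sup_{λ∈Λ} inf_{γ∈Γ} ℤ₁^{e,K}(P_γ, Q_λ) ≤ 0. -/
open Set Pointwise

/-- Gerstewitz scalarization function. -/
noncomputable def zG {Y : Type*} [AddCommGroup Y] [Module ℝ Y] (e : Y) (K : Set Y) (y : Y) :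
    EReal :=
  sInf ((fun t : ℝ => (t : EReal)) '' {t : ℝ | t • e - y ∈ K})

/-- ℤ₁^{e,K}(A,B) = sup_{b∈B} inf_{a∈A} z^{e,K}(a − b). -/
noncomputable def Zone {Y : Type*} [AddCommGroup Y] [Module ℝ Y] (e : Y) (K : Set Y)
    (A B : Set Y) : EReal :=
  ⨆ b ∈ B, ⨅ a ∈ A, zG e K (a - b)

lemma zone_key {Y : Type*} [AddCommGroup Y] [Module ℝ Y] [TopologicalSpace Y]
    [IsTopologicalAddGroup Y] [ContinuousSMul ℝ Y]
    (K : Set Y) (hKconv : Convex ℝ K)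
    (hKcone : ∀ (c : ℝ), 0 ≤ c → ∀ x ∈ K, c • x ∈ K)
    (e : Y) (heK : e ∈ K)
    (A B : Set Y) (hA : IsClosed (A + K)) :
    B ⊆ A + K ↔ Zone e K A B ≤ 0 := by
  have hKadd : ∀ x ∈ K, ∀ y ∈ K, x + y ∈ K := by
    intro x hx y hy
    have h := hKconv hx hy (by norm_num : (0:ℝ) ≤ 1/2) (by norm_num : (0:ℝ) ≤ 1/2)
      (by norm_num)
    have h2 := hKcone 2 (by norm_num) _ h
    have : (2:ℝ) • ((1/2:ℝ) • x + (1/2:ℝ) • y) = x + y := by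
      rw [smul_add, smul_smul, smul_smul]
      norm_num
    rwa [this] at h2
  constructor
  · intro hsub
    apply iSup₂_le
    intro b hb
    obtain ⟨a, ha, k, hk, hab⟩ := hsub hb
    refine le_trans (iInf₂_le a ha) ?_
    have h0 : (0:ℝ) • e - (a - b) ∈ K := by
      have hab' : a + k = b := hab
      have : (0:ℝ) • e - (a - b) = k := by
        rw [zero_smul, ← hab']; abel
      rw [this]; exact hk
    have : ((0:ℝ) : EReal) ∈ ((fun t : ℝ => (t : EReal)) '' {t : ℝ | t • e - (a - b) ∈ K}) :=
      ⟨0, h0, rfl⟩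
    calc zG e K (a - b) ≤ ((0:ℝ) : EReal) := sInf_le this
    _ = 0 := by norm_num
  · intro hZ b hb
    have hinf : (⨅ a ∈ A, zG e K (a - b)) ≤ 0 :=
      le_trans (le_iSup₂ (f := fun b _ => ⨅ a ∈ A, zG e K (a - b)) b hb) hZ
    have hmem : ∀ ε : ℝ, 0 < ε → b + ε • e ∈ A + K := by
      intro ε hε
      have hlt : (⨅ a ∈ A, zG e K (a - b)) < (ε : EReal) :=
        lt_of_le_of_lt hinf (by exact_mod_cast hε)
      obtain ⟨a, halt⟩ := iInf_lt_iff.mp hlt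
      obtain ⟨ha, halt⟩ := iInf_lt_iff.mp halt
      obtain ⟨x, ⟨t, ht, rfl⟩, hxlt⟩ := sInf_lt_iff.mp halt
      have hxlt' : (t : EReal) < (ε : EReal) := hxlt
      have htε : t < ε := by exact_mod_cast hxlt'
      have hk1 : t • e - (a - b) ∈ K := ht
      have hk2 : (ε - t) • e ∈ K := hKcone _ (by linarith) _ heK
      have hk : (t • e - (a - b)) + (ε - t) • e ∈ K := hKadd _ hk1 _ hk2
      refine ⟨a, ha, (t • e - (a - b)) + (ε - t) • e, hk, ?_⟩
      rw [sub_smul]; abel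
    have htend : Filter.Tendsto (fun ε : ℝ => b + ε • e) (nhdsWithin 0 (Set.Ioi 0))
        (nhds b) := by
      have : Filter.Tendsto (fun ε : ℝ => b + ε • e) (nhds 0) (nhds (b + (0:ℝ) • e)) := by
        exact Filter.Tendsto.const_add _ ((continuous_id.smul continuous_const).tendsto 0)
      rw [zero_smul, add_zero] at this
      exact this.mono_left nhdsWithin_le_nhds
    exact hA.mem_of_tendsto htend
      (Filter.eventually_iff_exists_mem.mpr ⟨Set.Ioi 0, self_mem_nhdsWithin,
        fun ε hε => hmem ε hε⟩)

/-- with each P_γ + K closed and attainment of inf_γ ℤ₁^{e,K}(P_γ,Q_λ),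
    P ≤_K^L Q iff sup_λ inf_γ ℤ₁^{e,K}(P_γ, Q_λ) ≤ 0. -/
theorem stmt_15 {Y Γ Λ : Type*} [AddCommGroup Y] [Module ℝ Y] [TopologicalSpace Y]
    [IsTopologicalAddGroup Y] [ContinuousSMul ℝ Y]
    (K : Set Y) (hKne : K.Nonempty) (hKcl : IsClosed K) (hKconv : Convex ℝ K)
    (hKcone : ∀ (c : ℝ), 0 ≤ c → ∀ x ∈ K, c • x ∈ K) (hKproper : K ≠ univ)
    (hKpointed : K ∩ (-K) ⊆ {0})
    (P : Γ → Set Y) (Q : Λ → Set Y)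
    (hP : ∀ γ, (P γ).Nonempty) (hQ : ∀ lam, (Q lam).Nonempty)
    (hPKcl : ∀ γ, IsClosed (P γ + K))
    (e : Y) (he : e ∈ K \ {0})
    (hatt : ∀ lam : Λ, ∃ γ : Γ, Zone e K (P γ) (Q lam) = ⨅ γ', Zone e K (P γ') (Q lam)) :
    (∀ lam : Λ, ∃ γ : Γ, Q lam ⊆ P γ + K) ↔
      (⨆ lam : Λ, ⨅ γ : Γ, Zone e K (P γ) (Q lam)) ≤ 0 := by
  constructor
  · intro h
    apply iSup_le
    intro lam
    obtain ⟨γ, hγ⟩ := h lam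
    exact le_trans (iInf_le _ γ)
      ((zone_key K hKconv hKcone e he.1 (P γ) (Q lam) (hPKcl γ)).mp hγ)
  · intro h lam
    obtain ⟨γ, hγ⟩ := hatt lam
    refine ⟨γ, (zone_key K hKconv hKcone e he.1 (P γ) (Q lam) (hPKcl γ)).mpr ?_⟩
    rw [hγ]
    exact le_trans (le_iSup (fun lam => ⨅ γ, Zone e K (P γ) (Q lam)) lam) h
end

section
/- Suppose each Q_λ − K is closed, and there exists e ∈ K \ {0} such that for every γ ∈ Γ the infimum inf_{λ∈Λ} ℤ₂^{e,K}(P_γ, Q_λ) is attained. Then P ≤_K^U Q if and only if sup_{γ∈Γ} inf_{λ∈Λ} ℤ₂^{e,K}(P_γ, Q_λ) ≤ 0. -/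
open Set Pointwise Filter Topology

/-- ℤ₂^{e,K}(A,B) = sup_{a∈A} inf_{b∈B} z^{e,K}(a − b). -/
noncomputable def Ztwo {Y : Type*} [AddCommGroup Y] [Module ℝ Y] (e : Y) (K : Set Y)
    (A B : Set Y) : EReal :=
  ⨆ a ∈ A, ⨅ b ∈ B, zG e K (a - b)

lemma key_forward {Y : Type*} [AddCommGroup Y] [Module ℝ Y]
    (K : Set Y) (e : Y) (A B : Set Y) (h : A ⊆ B - K) :
    Ztwo e K A B ≤ 0 := by
  refine iSup₂_le fun a ha => ?_
  obtain ⟨b, hb, k, hk, hbk⟩ := h ha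
  refine le_trans (iInf₂_le b hb) ?_
  refine sInf_le ⟨0, ?_, rfl⟩
  simp only [mem_setOf_eq, zero_smul, zero_sub]
  have hbk' : b - k = a := hbk
  have : -(a - b) = k := by rw [← hbk']; abel
  rw [this]; exact hk

lemma key_reverse {Y : Type*} [AddCommGroup Y] [Module ℝ Y] [TopologicalSpace Y]
    [IsTopologicalAddGroup Y] [ContinuousSMul ℝ Y]
    (K : Set Y) (hKconv : Convex ℝ K)
    (hKcone : ∀ (c : ℝ), 0 ≤ c → ∀ x ∈ K, c • x ∈ K)
    (e : Y) (heK : e ∈ K) (A B : Set Y)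
    (hcl : IsClosed (B - K)) (h : Ztwo e K A B ≤ 0) : A ⊆ B - K := by
  have hKadd : ∀ x ∈ K, ∀ y ∈ K, x + y ∈ K := fun x hx y hy => by
    have h2 : (1/2 : ℝ) • x + (1/2 : ℝ) • y ∈ K :=
      hKconv hx hy (by norm_num) (by norm_num) (by norm_num)
    have := hKcone 2 (by norm_num) _ h2
    simpa [smul_add, smul_smul] using this
  intro a ha
  have hinf : (⨅ b ∈ B, zG e K (a - b)) ≤ 0 :=
    le_trans (le_iSup₂ (f := fun a (_ : a ∈ A) => ⨅ b ∈ B, zG e K (a - b)) a ha) h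
  have claim : ∀ ε : ℝ, 0 < ε → ∃ t : ℝ, 0 ≤ t ∧ t < ε ∧ a - t • e ∈ B - K := by
    intro ε hε
    have hlt : (⨅ b ∈ B, zG e K (a - b)) < (ε : EReal) :=
      lt_of_le_of_lt hinf (by exact_mod_cast hε)
    rw [iInf_lt_iff] at hlt
    obtain ⟨b, hlt⟩ := hlt
    rw [iInf_lt_iff] at hlt
    obtain ⟨hb, hlt⟩ := hlt
    rw [zG, sInf_lt_iff] at hlt
    obtain ⟨x, ⟨t, ht, rfl⟩, hxlt⟩ := hlt
    have hxlt' : (t : EReal) < (ε : EReal) := hxlt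
    have htε : t < ε := by exact_mod_cast hxlt'
    simp only [mem_setOf_eq] at ht
    rcases le_or_gt 0 t with h0 | h0
    · refine ⟨t, h0, htε, b, hb, t • e - (a - b), ht, by abel⟩
    · refine ⟨0, le_refl 0, hε, b, hb, (t • e - (a - b)) + (-t) • e, ?_, ?_⟩
      · exact hKadd _ ht _ (hKcone (-t) (by linarith) e heK)
      · simp only [zero_smul, sub_zero, neg_smul, neg_neg]
        abel
  choose t ht0 htlt htmem using fun n : ℕ => claim (1 / (n + 1)) (by positivity)
  have htend : Tendsto t atTop (𝓝 0) := by
    refine squeeze_zero ht0 (fun n => le_of_lt (htlt n)) ?_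
    exact tendsto_one_div_add_atTop_nhds_zero_nat
  have htend2 : Tendsto (fun n => a - t n • e) atTop (𝓝 a) := by
    have : Tendsto (fun n => t n • e) atTop (𝓝 ((0 : ℝ) • e)) := htend.smul_const e
    rw [zero_smul] at this
    simpa using tendsto_const_nhds.sub this
  exact hcl.mem_of_tendsto htend2 (Eventually.of_forall htmem)

/-- with each Q_λ − K closed and attainment of inf_λ ℤ₂^{e,K}(P_γ,Q_λ),
    P ≤_K^U Q iff sup_γ inf_λ ℤ₂^{e,K}(P_γ, Q_λ) ≤ 0. -/
theorem stmt_16 {Y Γ Λ : Type*} [AddCommGroup Y] [Module ℝ Y] [TopologicalSpace Y]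
    [IsTopologicalAddGroup Y] [ContinuousSMul ℝ Y]
    (K : Set Y) (hKne : K.Nonempty) (hKcl : IsClosed K) (hKconv : Convex ℝ K)
    (hKcone : ∀ (c : ℝ), 0 ≤ c → ∀ x ∈ K, c • x ∈ K) (hKproper : K ≠ univ)
    (hKpointed : K ∩ (-K) ⊆ {0})
    (P : Γ → Set Y) (Q : Λ → Set Y)
    (hP : ∀ γ, (P γ).Nonempty) (hQ : ∀ lam, (Q lam).Nonempty)
    (hQKcl : ∀ lam, IsClosed (Q lam - K))
    (e : Y) (he : e ∈ K \ {0})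
    (hatt : ∀ γ : Γ, ∃ lam : Λ, Ztwo e K (P γ) (Q lam) = ⨅ lam', Ztwo e K (P γ) (Q lam')) :
    (∀ γ : Γ, ∃ lam : Λ, P γ ⊆ Q lam - K) ↔
      (⨆ γ : Γ, ⨅ lam : Λ, Ztwo e K (P γ) (Q lam)) ≤ 0 := by
  constructor
  · intro h
    refine iSup_le fun γ => ?_
    obtain ⟨lam, hlam⟩ := h γ
    exact le_trans (iInf_le _ lam) (key_forward K e _ _ hlam)
  · intro h γ
    obtain ⟨lam, hlam⟩ := hatt γ
    refine ⟨lam, key_reverse K hKconv hKcone e he.1 _ _ (hQKcl lam) ?_⟩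
    rw [hlam]
    exact le_trans (le_iSup (fun γ => ⨅ lam, Ztwo e K (P γ) (Q lam)) γ) h
end
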